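/- Given a Sekiya quadruple (Φ, e₁, e₂, λ) on W, the map J on W ⊕ span(∂ₜ, dt) defined by J(x) = Φ(x) for x ∈ W orthogonal to e₁ and e₂, J(e₁) = λe₁ − (1+λ²)^{1/2}∂ₜ, J(e₂) = −λe₂ − (1+λ²)^{1/2}dt, J(∂ₜ) = (1+λ²)^{1/2}e₁ − λ∂ₜ, J(dt) = (1+λ²)^{1/2}e₂ + λdt, satisfies J² = −Id and J* = −J. -/
import Mathlib


noncomputable section
open Module

variable {W : Type*} [AddCommGroup W] [Module ℝ W]

/-- The pairing on `W' = W ⊕ span(∂ₜ, dt)` extending a pairing `B` on `W`, with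
`∂ₜ, dt` isotropic, `⟨∂ₜ, dt⟩ = 1/2`, and both orthogonal to `W`. -/
def pairX (B : LinearMap.BilinForm ℝ W) (X Y : W × ℝ × ℝ) : ℝ :=
  B X.1 Y.1 + (X.2.1 * Y.2.2 + Y.2.1 * X.2.2) / 2

/-- a Sekiya quadruple `(Φ, e₁, e₂, λ)` on `W` determines a generalized
almost complex structure `J` on `W ⊕ span(∂ₜ,dt)`, the unique linear extension with
`J(x) = Φ(x)` for `x ⊥ e₁,e₂`, `J(e₁) = λe₁ − √(1+λ²)∂ₜ`, `J(e₂) = −λe₂ − √(1+λ²)dt`,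
`J(∂ₜ) = √(1+λ²)e₁ − λ∂ₜ`, `J(dt) = √(1+λ²)e₂ + λdt`; it satisfies `J² = −Id`,
`J* = −J`. -/
theorem J_from_sekiya_quadruple
    (B : LinearMap.BilinForm ℝ W)
    (hsymm : ∀ x y : W, B x y = B y x)
    (hnondeg : ∀ x : W, (∀ y : W, B x y = 0) → x = 0)
    (Φ : W →ₗ[ℝ] W) (e1 e2 : W) (lam : ℝ)
    (h11 : B e1 e1 = 0) (h22 : B e2 e2 = 0) (h12 : B e1 e2 = 1/2)
    (hskew : ∀ x y : W, B (Φ x) y = - B x (Φ y))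
    (hΦ1 : Φ e1 = lam • e1) (hΦ2 : Φ e2 = -lam • e2)
    (hsq : ∀ x : W, Φ (Φ x)
      = -x + (2 * (1 + lam^2)) • ((B x e2) • e1 + (B x e1) • e2))
    (J : (W × ℝ × ℝ) → (W × ℝ × ℝ))
    (hJ : ∀ X : W × ℝ × ℝ, J X =
      (Φ X.1 + (X.2.1 * Real.sqrt (1 + lam^2)) • e1
        + (X.2.2 * Real.sqrt (1 + lam^2)) • e2,
       -(Real.sqrt (1 + lam^2) * (2 * B X.1 e2)) - lam * X.2.1,
       -(Real.sqrt (1 + lam^2) * (2 * B X.1 e1)) + lam * X.2.2)) :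
    -- `J` is indeed the extension described above:
    (∀ x : W, B x e1 = 0 → B x e2 = 0 → J (x, 0, 0) = (Φ x, 0, 0))
    ∧ J (e1, 0, 0) = (lam • e1, -Real.sqrt (1 + lam^2), 0)
    ∧ J (e2, 0, 0) = (-lam • e2, 0, -Real.sqrt (1 + lam^2))
    ∧ J (0, 1, 0) = (Real.sqrt (1 + lam^2) • e1, -lam, 0)
    ∧ J (0, 0, 1) = (Real.sqrt (1 + lam^2) • e2, 0, lam)
    -- `J² = −Id`:
    ∧ (∀ X, J (J X) = -X)
    -- `J* = −J`:
    ∧ (∀ X Y, pairX B (J X) Y = - pairX B X (J Y)) := by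
  have hs : Real.sqrt (1 + lam^2) * Real.sqrt (1 + lam^2) = 1 + lam^2 :=
    Real.mul_self_sqrt (by positivity)
  set s := Real.sqrt (1 + lam^2) with hsdef
  refine ⟨?_, ?_, ?_, ?_, ?_, ?_, ?_⟩
  · intro x h1 h2
    simp [hJ, h1, h2]
  · simp [hJ, hΦ1, h11, h12]
  · simp [hJ, hΦ2, h22, hsymm e2 e1, h12]
  · simp [hJ]
  · simp [hJ]
  · rintro ⟨x, p, q⟩
    simp only [hJ, map_add, map_smul, hsq, hΦ1, hΦ2, LinearMap.add_apply,
      LinearMap.map_smul₂, LinearMap.smul_apply, smul_eq_mul,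
      hskew x e1, hskew x e2, h11, h22, h12, hsymm e2 e1, Prod.neg_mk,
      Prod.mk.injEq]
    refine ⟨?_, ?_, ?_⟩
    · match_scalars
      · ring
      · linear_combination (-2 * B x e2) * hs
      · linear_combination (-2 * B x e1) * hs
    · linear_combination (-p) * hs
    · linear_combination (-q) * hs
  · rintro ⟨x, p, q⟩ ⟨y, p', q'⟩
    simp only [hJ, pairX, map_add, LinearMap.add_apply, LinearMap.map_smul₂,
      smul_eq_mul, map_smul, LinearMap.smul_apply, hskew x y, hsymm e1 y, hsymm e2 y]
    ring
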